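/- Let N ≥ 1, let Δ = diag(δ₁,…,δ_N) with δᵢ > 0 for all i, let x ∈ ℝᴺ with xᵢ ≠ 0 for all i, and let y ∈ ℝᴺ with yᵢ > 0 for all i. Suppose ∑_{i=1}^{N} (1/δᵢ)·[xᵢ yᵢ]₊ < 1 and set μ := 1 − ∑_{i=1}^{N} (1/δᵢ)·[xᵢ yᵢ]₊. Define dᵢ = yᵢ/|xᵢ| and D = diag(d₁,…,d_N). Let E ∈ ℝ^{N×N} with spectral norm ‖E‖₂ ≤ 1, and let σ ∈ ℝ satisfy |σ| < μ·(minᵢ dᵢδᵢ)/(maxᵢ dᵢ). Then the matrix A = −Δ + x yᵀ + σE satisfies AᵀD + DA ≺ 0; in particular, A is diagonally stable with certificate D. -/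

import Mathlib

open Matrix

/-- A real square matrix `A` is *diagonally stable* if there exists a diagonal matrix `D`
with positive diagonal entries such that `Aᵀ D + D A` is negative definite. -/
def DiagonallyStable {n : Type*} [Fintype n] [DecidableEq n] (A : Matrix n n ℝ) : Prop :=
  ∃ d : n → ℝ, (∀ i, 0 < d i) ∧
    (-(Aᵀ * Matrix.diagonal d + Matrix.diagonal d * A)).PosDef

open scoped Matrix.Norms.L2Operator

lemma rank1_bound_aux (N : ℕ) (δ x y d : Fin N → ℝ) (hδ : ∀ i, 0 < δ i) (hx : ∀ i, x i ≠ 0)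
    (hy : ∀ i, 0 < y i) (hd : ∀ i, d i = y i / |x i|) (z : Fin N → ℝ) :
    (∑ j, y j * z j) * (∑ i, d i * x i * z i)
      ≤ (∑ i, (1 / δ i) * max (x i * y i) 0) * ∑ i, d i * δ i * z i ^ 2 := by
  classical
  set S := Finset.univ.filter (fun i => 0 < x i) with hS
  set T := Finset.univ.filter (fun i => ¬ 0 < x i) with hT
  set P := ∑ i ∈ S, y i * z i with hP
  set Q := ∑ i ∈ T, y i * z i with hQ
  have hxneg : ∀ i ∈ T, x i < 0 := by
    intro i hi
    rw [hT, Finset.mem_filter] at hi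
    exact lt_of_le_of_ne (le_of_not_gt hi.2) (hx i)
  have h1 : ∑ j, y j * z j = P + Q :=
    (Finset.sum_filter_add_sum_filter_not Finset.univ _ _).symm
  have h2 : ∑ i, d i * x i * z i = P - Q := by
    rw [← Finset.sum_filter_add_sum_filter_not Finset.univ (fun i => 0 < x i)
      (fun i => d i * x i * z i), ← hS, ← hT]
    have e1 : ∑ i ∈ S, d i * x i * z i = P := by
      refine Finset.sum_congr rfl fun i hi => ?_
      rw [hS, Finset.mem_filter] at hi
      rw [hd i, abs_of_pos hi.2]
      field_simp [hx i]
    have e2 : ∑ i ∈ T, d i * x i * z i = -Q := by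
      rw [hQ, ← Finset.sum_neg_distrib]
      refine Finset.sum_congr rfl fun i hi => ?_
      have hxi := hxneg i hi
      rw [hd i, abs_of_neg hxi]
      field_simp [hx i]
    rw [e1, e2]; ring
  have h3 : P ^ 2 ≤ (∑ i ∈ S, y i * x i / δ i) * (∑ i ∈ S, d i * δ i * z i ^ 2) := by
    have key := Finset.sum_mul_sq_le_sq_mul_sq S (fun i => Real.sqrt (y i * x i / δ i))
      (fun i => Real.sqrt (y i * δ i / x i) * z i)
    have e0 : ∑ i ∈ S, Real.sqrt (y i * x i / δ i) * (Real.sqrt (y i * δ i / x i) * z i) = P := by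
      refine Finset.sum_congr rfl fun i hi => ?_
      rw [hS, Finset.mem_filter] at hi
      have hxi : 0 < x i := hi.2
      have hδi := hδ i
      have hyi := hy i
      rw [← mul_assoc, ← Real.sqrt_mul (by positivity)]
      have : y i * x i / δ i * (y i * δ i / x i) = (y i) ^ 2 := by
        field_simp
      rw [this, Real.sqrt_sq (hy i).le]
    have e1 : ∑ i ∈ S, Real.sqrt (y i * x i / δ i) ^ 2 = ∑ i ∈ S, y i * x i / δ i := by
      refine Finset.sum_congr rfl fun i hi => ?_
      rw [hS, Finset.mem_filter] at hi
      have hxi : 0 < x i := hi.2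
      have hδi := hδ i
      have hyi := hy i
      exact Real.sq_sqrt (by positivity)
    have e2 : ∑ i ∈ S, (Real.sqrt (y i * δ i / x i) * z i) ^ 2 = ∑ i ∈ S, d i * δ i * z i ^ 2 := by
      refine Finset.sum_congr rfl fun i hi => ?_
      rw [hS, Finset.mem_filter] at hi
      have hxi : 0 < x i := hi.2
      have hδi := hδ i
      have hyi := hy i
      rw [mul_pow, Real.sq_sqrt (by positivity), hd i, abs_of_pos hxi]
      ring
    rw [e0, e1, e2] at key
    exact key
  have h4 : ∑ i ∈ S, y i * x i / δ i = ∑ i, (1 / δ i) * max (x i * y i) 0 := by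
    rw [← Finset.sum_filter_add_sum_filter_not Finset.univ (fun i => 0 < x i)
      (fun i => (1 / δ i) * max (x i * y i) 0), ← hS, ← hT]
    have e1 : ∑ i ∈ T, (1 / δ i) * max (x i * y i) 0 = 0 := by
      refine Finset.sum_eq_zero fun i hi => ?_
      rw [max_eq_right (mul_nonpos_of_nonpos_of_nonneg (hxneg i hi).le (hy i).le), mul_zero]
    rw [e1, add_zero]
    refine Finset.sum_congr rfl fun i hi => ?_
    rw [hS, Finset.mem_filter] at hi
    have hxi : 0 < x i := hi.2
    have hyi := hy i
    rw [max_eq_left (by positivity)]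
    field_simp
  have h5 : ∑ i ∈ S, d i * δ i * z i ^ 2 ≤ ∑ i, d i * δ i * z i ^ 2 := by
    refine Finset.sum_le_sum_of_subset_of_nonneg (Finset.filter_subset _ _) fun i _ _ => ?_
    have hdi : 0 < d i := by rw [hd i]; exact div_pos (hy i) (abs_pos.mpr (hx i))
    have hδi := hδ i
    positivity
  have h6 : 0 ≤ ∑ i ∈ S, y i * x i / δ i := by
    refine Finset.sum_nonneg fun i hi => ?_
    rw [hS, Finset.mem_filter] at hi
    have hxi : 0 < x i := hi.2
    have hδi := hδ i
    have hyi := hy i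
    positivity
  rw [h1, h2, ← h4]
  nlinarith [sq_nonneg Q, mul_le_mul_of_nonneg_left h5 h6]

lemma mulVec_sq_le_aux (N : ℕ) (E : Matrix (Fin N) (Fin N) ℝ) (z : Fin N → ℝ) (hE : ‖E‖ ≤ 1) :
    ∑ i, (E *ᵥ z) i ^ 2 ≤ ∑ i, z i ^ 2 := by
  have h := E.l2_opNorm_mulVec ((EuclideanSpace.equiv (Fin N) ℝ).symm z)
  have hz : ‖(EuclideanSpace.equiv (Fin N) ℝ).symm z‖ = Real.sqrt (∑ i, z i ^ 2) := by
    rw [EuclideanSpace.norm_eq]; congr 1; exact Finset.sum_congr rfl (by simp [sq_abs])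
  have hw : ‖(EuclideanSpace.equiv (Fin N) ℝ).symm (E *ᵥ (EuclideanSpace.equiv (Fin N) ℝ).symm z)‖
      = Real.sqrt (∑ i, (E *ᵥ z) i ^ 2) := by
    rw [EuclideanSpace.norm_eq]; congr 1
    refine Finset.sum_congr rfl fun i _ => ?_
    rw [Real.norm_eq_abs, sq_abs]; rfl
  rw [hw, hz] at h
  have h2 : Real.sqrt (∑ i, (E *ᵥ z) i ^ 2) ≤ Real.sqrt (∑ i, z i ^ 2) := by
    calc Real.sqrt (∑ i, (E *ᵥ z) i ^ 2) ≤ ‖E‖ * Real.sqrt (∑ i, z i ^ 2) := h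
    _ ≤ 1 * Real.sqrt (∑ i, z i ^ 2) := mul_le_mul_of_nonneg_right hE (Real.sqrt_nonneg _)
    _ = _ := one_mul _
  exact (Real.sqrt_le_sqrt_iff (by positivity)).mp h2

/-- robustness of the rank-1 certificate to perturbations `σ E`
with `‖E‖₂ ≤ 1` (spectral norm) and `|σ|` small enough. -/
theorem rank1_perturbed_diagonallyStable (N : ℕ) (hN : 1 ≤ N) (δ x y : Fin N → ℝ)
    (hδ : ∀ i, 0 < δ i) (hx : ∀ i, x i ≠ 0) (hy : ∀ i, 0 < y i)
    (hsum : ∑ i, (1 / δ i) * max (x i * y i) 0 < 1)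
    (μ : ℝ) (hμ : μ = 1 - ∑ i, (1 / δ i) * max (x i * y i) 0)
    (d : Fin N → ℝ) (hd : ∀ i, d i = y i / |x i|)
    (E : Matrix (Fin N) (Fin N) ℝ) (hE : ‖E‖ ≤ 1)
    (σ : ℝ)
    (hσ : |σ| < μ * (Finset.univ.inf' (Finset.univ_nonempty_iff.mpr ⟨⟨0, hN⟩⟩)
            (fun i => d i * δ i) /
          Finset.univ.sup' (Finset.univ_nonempty_iff.mpr ⟨⟨0, hN⟩⟩) (fun i => d i)))
    (A D : Matrix (Fin N) (Fin N) ℝ)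
    (hA : A = -(Matrix.diagonal δ) + Matrix.vecMulVec x y + σ • E)
    (hD : D = Matrix.diagonal d) :
    (-(Aᵀ * D + D * A)).PosDef := by
  have hdpos : ∀ i, 0 < d i := fun i => by
    rw [hd i]; exact div_pos (hy i) (abs_pos.mpr (hx i))
  set m := Finset.univ.inf' (Finset.univ_nonempty_iff.mpr ⟨⟨0, hN⟩⟩)
      (fun i => d i * δ i) with hm
  set M := Finset.univ.sup' (Finset.univ_nonempty_iff.mpr ⟨⟨0, hN⟩⟩) (fun i => d i) with hM
  have hMpos : 0 < M :=
    lt_of_lt_of_le (hdpos ⟨0, hN⟩) (Finset.le_sup' _ (Finset.mem_univ _))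
  have hmpos : 0 < m := by
    rw [hm]
    rw [Finset.lt_inf'_iff]
    intro i _
    exact mul_pos (hdpos i) (hδ i)
  have hμpos : 0 < μ := by rw [hμ]; linarith
  have hσm : |σ| * M < μ * m := by
    calc |σ| * M < μ * (m / M) * M := mul_lt_mul_of_pos_right hσ hMpos
    _ = μ * m := by field_simp
  refine Matrix.PosDef.of_dotProduct_mulVec_pos ?_ ?_
  · subst hD
    unfold Matrix.IsHermitian
    simp [Matrix.conjTranspose_neg, Matrix.conjTranspose_add, Matrix.conjTranspose_mul, add_comm]
  · intro z hz
    have hquad : dotProduct (star z) ((-(Aᵀ * D + D * A)) *ᵥ z)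
        = -2 * ∑ i, d i * z i * (A *ᵥ z) i := by
      subst hD
      rw [show star z = z from rfl, Matrix.neg_mulVec, dotProduct_neg, Matrix.add_mulVec,
        dotProduct_add, ← Matrix.mulVec_mulVec, ← Matrix.mulVec_mulVec,
        dotProduct_mulVec z Aᵀ, Matrix.vecMul_transpose]
      simp only [Matrix.mulVec_diagonal, dotProduct]
      rw [← Finset.sum_add_distrib, Finset.mul_sum, ← Finset.sum_neg_distrib]
      exact Finset.sum_congr rfl fun i _ => by ring
    have hAz : ∀ i, (A *ᵥ z) i = -(δ i * z i) + x i * (∑ j, y j * z j) + σ * (E *ᵥ z) i := by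
      intro i
      rw [hA, Matrix.add_mulVec, Matrix.add_mulVec, Matrix.neg_mulVec, Matrix.smul_mulVec]
      simp [Matrix.mulVec_diagonal, Matrix.diagonal_apply, ite_mul, zero_mul, Finset.sum_ite_eq,
        Matrix.mulVec, dotProduct, Matrix.vecMulVec_apply, Finset.mul_sum, mul_assoc]
    rw [hquad]
    have hexp : ∑ i, d i * z i * (A *ᵥ z) i
        = -(∑ i, d i * δ i * z i ^ 2) + (∑ j, y j * z j) * (∑ i, d i * x i * z i)
          + σ * ∑ i, d i * z i * (E *ᵥ z) i := by
      simp_rw [hAz]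
      rw [← Finset.sum_neg_distrib, Finset.mul_sum, Finset.mul_sum, ← Finset.sum_add_distrib,
        ← Finset.sum_add_distrib]
      refine Finset.sum_congr rfl fun i _ => ?_
      ring
    rw [hexp]
    -- notation
    set Z := ∑ i, z i ^ 2 with hZ
    set Sd := ∑ i, d i * δ i * z i ^ 2 with hSd
    set R := (∑ j, y j * z j) * (∑ i, d i * x i * z i) with hR
    set T := ∑ i, d i * z i * (E *ᵥ z) i with hTT
    have hZpos : 0 < Z := by
      rw [hZ]
      obtain ⟨i, hi⟩ := Function.ne_iff.mp hz
      refine Finset.sum_pos' (fun j _ => sq_nonneg _) ⟨i, Finset.mem_univ i, sq_pos_of_ne_zero hi⟩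
    -- (a) rank-1 bound
    have ha : R ≤ (1 - μ) * Sd :=
      hμ ▸ by simpa using rank1_bound_aux N δ x y d hδ hx hy hd z
    -- (c) lower bound on Sd
    have hc : m * Z ≤ Sd := by
      rw [hSd, hZ, Finset.mul_sum]
      refine Finset.sum_le_sum fun i _ => ?_
      exact mul_le_mul_of_nonneg_right (Finset.inf'_le _ (Finset.mem_univ i)) (sq_nonneg _)
    -- (b) bound on perturbation term
    have hb : σ * T ≤ |σ| * (M * Z) := by
      have hT2 : T ^ 2 ≤ (M * Z) ^ 2 := by
        have key := Finset.sum_mul_sq_le_sq_mul_sq Finset.univ (fun i => d i * z i)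
          (fun i => (E *ᵥ z) i)
        have e0 : ∑ i, (d i * z i) * (E *ᵥ z) i = T := rfl
        have e1 : ∑ i, (d i * z i) ^ 2 ≤ M ^ 2 * Z := by
          rw [hZ, Finset.mul_sum]
          refine Finset.sum_le_sum fun i _ => ?_
          rw [mul_pow]
          exact mul_le_mul_of_nonneg_right
            (pow_le_pow_left₀ (hdpos i).le (Finset.le_sup' _ (Finset.mem_univ i)) 2)
            (sq_nonneg _)
        have e2 : ∑ i, (E *ᵥ z) i ^ 2 ≤ Z := mulVec_sq_le_aux N E z hE
        rw [e0] at key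
        have hEnn : 0 ≤ ∑ i, (E *ᵥ z) i ^ 2 := Finset.sum_nonneg fun i _ => sq_nonneg _
        calc T ^ 2 ≤ (∑ i, (d i * z i) ^ 2) * ∑ i, (E *ᵥ z) i ^ 2 := key
        _ ≤ (M ^ 2 * Z) * Z := by
            apply mul_le_mul e1 e2 hEnn (by positivity)
        _ = (M * Z) ^ 2 := by ring
      have hTabs : |T| ≤ M * Z := by
        have := Real.sqrt_le_sqrt hT2
        rwa [Real.sqrt_sq_eq_abs, Real.sqrt_sq_eq_abs, abs_of_nonneg (by positivity : (0:ℝ) ≤ M * Z)] at this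
      calc σ * T ≤ |σ * T| := le_abs_self _
      _ = |σ| * |T| := abs_mul σ T
      _ ≤ |σ| * (M * Z) := mul_le_mul_of_nonneg_left hTabs (abs_nonneg σ)
    -- (d)
    have hdd : |σ| * (M * Z) < μ * (m * Z) := by
      rw [← mul_assoc, ← mul_assoc]
      exact mul_lt_mul_of_pos_right hσm hZpos
    have hcc : μ * (m * Z) ≤ μ * Sd := mul_le_mul_of_nonneg_left hc hμpos.le
    nlinarith
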